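/- Let G be a graph and X an independent set of vertices in G all having the same neighborhood, with |X| ≥ 2. Let x ∈ X and G' = G - x. If there is a set A of at most |X| - 3 vertex pairs (edge edits) such that G' Δ A is paw-free, then for the same A, G Δ A is paw-free. -/

import Mathlib

open SimpleGraph

/-- The paw: triangle 0,1,2 plus pendant vertex 3 attached at 2. -/
def paw : SimpleGraph (Fin 4) :=
  SimpleGraph.fromEdgeSet {s(0,1), s(0,2), s(1,2), s(2,3)}

/-- `G` contains an induced copy of the paw. -/
def HasInducedPaw {V : Type*} (G : SimpleGraph V) : Prop :=
  ∃ f : Fin 4 ↪ V, ∀ a b : Fin 4, paw.Adj a b ↔ G.Adj (f a) (f b)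

def PawFree {V : Type*} (G : SimpleGraph V) : Prop := ¬ HasInducedPaw G

/-- `G` is complete multipartite with parts given as the fibers of `part`:
two vertices are adjacent iff they lie in different parts. -/
def IsCMWith {V ι : Type*} (G : SimpleGraph V) (part : V → ι) : Prop :=
  ∀ u v : V, G.Adj u v ↔ part u ≠ part v

/-- `G` is complete multipartite. -/
def IsCM {V : Type*} (G : SimpleGraph V) : Prop :=
  ∃ part : V → V, IsCMWith G part

/-- `G` is complete multipartite with at least three parts. -/
def IsCM3 {V : Type*} (G : SimpleGraph V) : Prop :=
  ∃ part : V → V, IsCMWith G part ∧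
    ∃ u v w : V, part u ≠ part v ∧ part u ≠ part w ∧ part v ≠ part w

/-- The graph `G Δ A`: edge set is the symmetric difference of `E(G)` and `A`. -/
def edit {V : Type*} (G : SimpleGraph V) (A : Finset (Sym2 V)) : SimpleGraph V :=
  SimpleGraph.fromEdgeSet (symmDiff G.edgeSet (A : Set (Sym2 V)))

lemma paw_adj_iff (a b : Fin 4) :
    paw.Adj a b ↔ ((a = 0 ∧ b = 1) ∨ (a = 1 ∧ b = 0) ∨ (a = 0 ∧ b = 2) ∨ (a = 2 ∧ b = 0) ∨
      (a = 1 ∧ b = 2) ∨ (a = 2 ∧ b = 1) ∨ (a = 2 ∧ b = 3) ∨ (a = 3 ∧ b = 2)) := by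
  rw [paw, fromEdgeSet_adj]
  simp [Set.mem_insert_iff, Sym2.eq_iff]
  aesop

instance pawDec : DecidableRel paw.Adj := fun a b => decidable_of_iff' _ (paw_adj_iff a b)

lemma pawFact1 : ∀ i j : Fin 4, i ≠ j → ¬ paw.Adj i j →
    ∃ j', j' ≠ i ∧ j' ≠ j ∧ ¬(paw.Adj j j' ↔ paw.Adj i j') := by decide

lemma pawFact2 : ∀ i : Fin 4,
    (Finset.univ.filter (fun j : Fin 4 => j ≠ i ∧ ¬ paw.Adj i j)).card ≤ 2 := by decide

lemma pawFact3 : ∀ i j1 j2 : Fin 4, j1 ≠ i → j2 ≠ i → j1 ≠ j2 →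
    ¬paw.Adj i j1 → ¬paw.Adj i j2 → paw.Adj j1 j2 := by decide

lemma edit_adj {V : Type*} (G : SimpleGraph V) (A : Finset (Sym2 V)) (u v : V) :
    (edit G A).Adj u v ↔ (((G.Adj u v ∧ s(u,v) ∉ A) ∨ (s(u,v) ∈ A ∧ ¬ G.Adj u v)) ∧ u ≠ v) := by
  rw [edit, fromEdgeSet_adj]
  simp [Set.mem_symmDiff]

lemma edit_adj_of_not_mem {V : Type*} (G : SimpleGraph V) (A : Finset (Sym2 V)) {u v : V}
    (h : s(u,v) ∉ A) : (edit G A).Adj u v ↔ G.Adj u v := by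
  rw [edit_adj]
  constructor
  · rintro ⟨(⟨h1, -⟩ | ⟨h1, -⟩), -⟩
    · exact h1
    · exact absurd h1 h
  · intro h1
    exact ⟨Or.inl ⟨h1, h⟩, h1.ne⟩

lemma mem_of_edit_adj_ne {V : Type*} (G : SimpleGraph V) (A : Finset (Sym2 V)) {u v : V}
    (h : ¬ ((edit G A).Adj u v ↔ G.Adj u v)) : s(u,v) ∈ A := by
  by_contra hA
  exact h (edit_adj_of_not_mem G A hA)

/-- Safeness of the false-twin rule: if `X` is an independent set of false twins,
`x ∈ X`, and `A` is a set of at most `|X| - 3` edits avoiding `x` such that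
`(G - x) Δ A` is paw-free, then `G Δ A` is paw-free. -/
theorem statement_1 {V : Type*} (G : SimpleGraph V) (X : Finset V) (x : V)
    (hx : x ∈ X) (hX2 : 2 ≤ X.card)
    (hindep : ∀ a ∈ X, ∀ b ∈ X, a ≠ b → ¬ G.Adj a b)
    (htwin : ∀ a ∈ X, ∀ b ∈ X, G.neighborSet a = G.neighborSet b)
    (A : Finset (Sym2 V)) (hA : A.card ≤ X.card - 3)
    (hAx : ∀ e ∈ A, x ∉ e)
    (hsol : PawFree ((edit G A).induce {v : V | v ≠ x})) :
    PawFree (edit G A) := by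
  classical
  intro hpaw
  obtain ⟨f, hf⟩ := hpaw
  have hnotA : ∀ v, s(x, v) ∉ A := fun v hv => hAx _ hv (by simp)
  have hHx : ∀ v, (edit G A).Adj x v ↔ G.Adj x v :=
    fun v => edit_adj_of_not_mem G A (hnotA v)
  have htw : ∀ y ∈ X, ∀ v, G.Adj y v ↔ G.Adj x v := by
    intro y hy v
    have h := htwin y hy x hx
    constructor <;> intro hadj
    · have : v ∈ G.neighborSet x := h ▸ (G.mem_neighborSet y v).2 hadj
      exact (G.mem_neighborSet x v).1 this
    · have : v ∈ G.neighborSet y := h ▸ (G.mem_neighborSet x v).2 hadj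
      exact (G.mem_neighborSet y v).1 this
  have hxX : ∀ y ∈ X, ¬ G.Adj x y := by
    intro y hy h
    rcases eq_or_ne x y with rfl | hne
    · exact G.irrefl h
    · exact hindep x hx y hy hne h
  have hHxy : ∀ y ∈ X.erase x, ¬ (edit G A).Adj x y := by
    intro y hy h
    exact hxX y (Finset.mem_of_mem_erase hy) ((hHx y).1 h)
  by_cases hxim : ∃ i, f i = x
  case neg =>
    push_neg at hxim
    exact hsol ⟨⟨fun a => ⟨f a, hxim a⟩, fun a b h => f.injective (by simpa using h)⟩,
      by intro a b; exact hf a b⟩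
  case pos =>
  obtain ⟨i, hfi⟩ := hxim
  have hfx : ∀ j, (edit G A).Adj x (f j) ↔ paw.Adj i j := by
    intro j; rw [← hfi]; exact (hf i j).symm
  -- the set of "bad" candidates
  set T := (X.erase x).filter (fun y => ¬ ∀ j, j ≠ i → y ≠ f j ∧ s(y, f j) ∉ A) with hT
  have hTsub : T ⊆ X.erase x := Finset.filter_subset _ _
  -- every bad candidate is in an edit whose other endpoint is a paw vertex
  have hK : ∀ y ∈ T, ∃ j, j ≠ i ∧ s(y, f j) ∈ A := by
    intro y hy
    rw [hT, Finset.mem_filter] at hy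
    obtain ⟨hyE, hy2⟩ := hy
    push_neg at hy2
    obtain ⟨j, hji, hj2⟩ := hy2
    by_cases hyf : y = f j
    · -- y is itself a paw vertex; a forced edit exists
      have hyX : y ∈ X := Finset.mem_of_mem_erase hyE
      have hij : i ≠ j := by
        intro h
        exact (Finset.ne_of_mem_erase hyE) (by rw [hyf, ← h, hfi])
      have hnadj : ¬ paw.Adj i j := by
        intro h
        exact hHxy y hyE (by rw [hyf]; exact (hfx j).2 h)
      obtain ⟨j', hj'i, hj'j, hmis⟩ := pawFact1 i j hij hnadj
      refine ⟨j', hj'i, ?_⟩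
      apply mem_of_edit_adj_ne G A
      intro hiff
      apply hmis
      have h1 : (edit G A).Adj y (f j') ↔ paw.Adj j j' := by
        rw [hyf]; exact (hf j j').symm
      have h2 : G.Adj y (f j') ↔ paw.Adj i j' := by
        rw [htw y hyX, ← hHx, hfx]
      rw [← h1, ← h2]
      exact hiff
    · exact ⟨j, hji, hj2 hyf⟩
  -- counting: T is strictly smaller than X.erase x
  have hcard : T.card < (X.erase x).card := by
    set P := T.filter (fun y => ∃ j, j ≠ i ∧ y = f j) with hP
    set Q := T.filter (fun y => ¬ ∃ j, j ≠ i ∧ y = f j) with hQ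
    have hPQ : P.card + Q.card = T.card := Finset.card_filter_add_card_filter_not _
    have herase : (X.erase x).card = X.card - 1 := Finset.card_erase_of_mem hx
    have hP2 : P.card ≤ 2 := by
      have hsub : P ⊆ (Finset.univ.filter (fun j : Fin 4 => j ≠ i ∧ ¬ paw.Adj i j)).image f := by
        intro y hy
        rw [hP, Finset.mem_filter] at hy
        obtain ⟨hyT, j, hji, hyf⟩ := hy
        refine Finset.mem_image.2 ⟨j, ?_, hyf.symm⟩
        rw [Finset.mem_filter]
        refine ⟨Finset.mem_univ _, hji, ?_⟩
        intro h
        exact hHxy y (hTsub hyT) (by rw [hyf]; exact (hfx j).2 h)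
      calc P.card ≤ _ := Finset.card_le_card hsub
        _ ≤ _ := Finset.card_image_le
        _ ≤ 2 := pawFact2 i
    -- the injection from Q into A
    set φ : V → Sym2 V := fun y =>
      if h : ∃ j, j ≠ i ∧ s(y, f j) ∈ A then s(y, f h.choose) else s(y, y) with hφ
    have hQspec : ∀ y ∈ Q, ∃ j, j ≠ i ∧ s(y, f j) ∈ A := by
      intro y hy
      exact hK y (Finset.mem_of_mem_filter y hy)
    have hφspec : ∀ y ∈ Q, ∃ j, j ≠ i ∧ φ y = s(y, f j) ∧ s(y, f j) ∈ A := by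
      intro y hy
      have h := hQspec y hy
      refine ⟨h.choose, h.choose_spec.1, ?_, h.choose_spec.2⟩
      rw [hφ]; simp only [dif_pos h]
    have hQnotf : ∀ y ∈ Q, ∀ j, j ≠ i → y ≠ f j := by
      intro y hy j hji hyf
      rw [hQ, Finset.mem_filter] at hy
      exact hy.2 ⟨j, hji, hyf⟩
    have hφinj : Set.InjOn φ Q := by
      intro y hy y' hy' heq
      obtain ⟨j, hji, hφy, -⟩ := hφspec y hy
      obtain ⟨j', hj'i, hφy', -⟩ := hφspec y' hy'
      rw [hφy, hφy', Sym2.eq_iff] at heq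
      rcases heq with ⟨h1, -⟩ | ⟨h1, h2⟩
      · exact h1
      · exact absurd h1 (hQnotf y hy j' hj'i)
    have hφmem : ∀ y ∈ Q, φ y ∈ A := by
      intro y hy
      obtain ⟨j, -, hφy, hmem⟩ := hφspec y hy
      rw [hφy]; exact hmem
    have hQA : Q.card ≤ A.card :=
      Finset.card_le_card_of_injOn φ hφmem hφinj
    rcases Nat.eq_zero_or_pos A.card with hA0 | hA1
    · have hTe : T = ∅ := by
        rw [Finset.eq_empty_iff_forall_notMem]
        intro y hy
        obtain ⟨j, -, hj⟩ := hK y hy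
        rw [Finset.card_eq_zero.1 hA0] at hj
        exact absurd hj (Finset.notMem_empty _)
      rw [hTe]
      simp only [Finset.card_empty]
      omega
    · by_cases hP1 : P.card ≤ 1
      · omega
      · push_neg at hP1
        obtain ⟨y1, hy1, y2, hy2, hne⟩ := Finset.one_lt_card.1 hP1
        rw [hP, Finset.mem_filter] at hy1 hy2
        obtain ⟨hy1T, j1, hj1i, hy1f⟩ := hy1
        obtain ⟨hy2T, j2, hj2i, hy2f⟩ := hy2
        have hnadj1 : ¬ paw.Adj i j1 := by
          intro h
          exact hHxy y1 (hTsub hy1T) (by rw [hy1f]; exact (hfx j1).2 h)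
        have hnadj2 : ¬ paw.Adj i j2 := by
          intro h
          exact hHxy y2 (hTsub hy2T) (by rw [hy2f]; exact (hfx j2).2 h)
        have hj12 : j1 ≠ j2 := by
          intro h
          exact hne (by rw [hy1f, hy2f, h])
        have hadj : paw.Adj j1 j2 := pawFact3 i j1 j2 hj1i hj2i hj12 hnadj1 hnadj2
        have hGn : ¬ G.Adj y1 y2 :=
          hindep y1 (Finset.mem_of_mem_erase (hTsub hy1T)) y2
            (Finset.mem_of_mem_erase (hTsub hy2T)) hne
        have hHadj : (edit G A).Adj y1 y2 := by
          rw [hy1f, hy2f]; exact (hf j1 j2).1 hadj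
        have he0 : s(y1, y2) ∈ A := by
          apply mem_of_edit_adj_ne G A
          intro h
          exact hGn (h.1 hHadj)
        have hQA' : Q.card ≤ A.card - 1 := by
          have hmaps : ∀ y ∈ Q, φ y ∈ A.erase s(y1, y2) := by
            intro y hy
            obtain ⟨j, hji, hφy, hmem⟩ := hφspec y hy
            rw [Finset.mem_erase]
            refine ⟨?_, by rw [hφy]; exact hmem⟩
            rw [hφy]
            intro h
            rw [Sym2.eq_iff] at h
            rcases h with ⟨h1, -⟩ | ⟨h1, -⟩
            · exact hQnotf y hy j1 hj1i (h1.trans hy1f)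
            · exact hQnotf y hy j2 hj2i (h1.trans hy2f)
          have := Finset.card_le_card_of_injOn φ hmaps hφinj
          rwa [Finset.card_erase_of_mem he0] at this
        omega
  -- obtain a good replacement vertex y
  obtain ⟨y, hyE, hyT⟩ : ∃ y ∈ X.erase x, y ∉ T := by
    by_contra h
    push_neg at h
    exact absurd (Finset.card_le_card h) (not_le.2 hcard)
  have hgood : ∀ j, j ≠ i → y ≠ f j ∧ s(y, f j) ∉ A := by
    by_contra h
    exact hyT (by rw [hT, Finset.mem_filter]; exact ⟨hyE, h⟩)
  have hyX : y ∈ X := Finset.mem_of_mem_erase hyE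
  have hyx : y ≠ x := Finset.ne_of_mem_erase hyE
  set g : Fin 4 → V := fun a => if a = i then y else f a with hg
  have hginj : Function.Injective g := by
    intro a b hab
    rw [hg] at hab
    by_cases ha : a = i <;> by_cases hb : b = i
    · rw [ha, hb]
    · simp only [ha, hb, if_pos, if_neg, if_true] at hab
      exact absurd hab (hgood b hb).1
    · simp only [ha, hb, if_pos, if_neg, if_true] at hab
      exact absurd hab.symm (hgood a ha).1
    · simp only [ha, hb, if_neg] at hab
      exact f.injective hab
  have hgadj : ∀ a b, paw.Adj a b ↔ (edit G A).Adj (g a) (g b) := by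
    have key : ∀ b, b ≠ i → ((edit G A).Adj y (f b) ↔ paw.Adj i b) := by
      intro b hb
      rw [edit_adj_of_not_mem G A (hgood b hb).2, htw y hyX, ← hHx, hfx]
    intro a b
    by_cases ha : a = i <;> by_cases hb : b = i
    · rw [ha, hb, hg]
      simp only [if_pos]
      exact iff_of_false (paw.irrefl) ((edit G A).irrefl)
    · rw [ha, hg]
      simp only [if_pos, if_neg hb, if_true]
      exact (key b hb).symm
    · rw [hb, hg]
      simp only [if_pos, if_neg ha, if_true]
      rw [paw.adj_comm, (edit G A).adj_comm]
      exact (key a ha).symm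
    · rw [hg]
      simp only [if_neg ha, if_neg hb]
      exact hf a b
  have hgne : ∀ a, g a ≠ x := by
    intro a
    rw [hg]
    by_cases ha : a = i
    · simp only [ha, if_pos]
      exact hyx
    · simp only [if_neg ha]
      intro h
      exact ha (f.injective (h.trans hfi.symm))
  exact hsol ⟨⟨fun a => ⟨g a, hgne a⟩, fun a b h => hginj (by simpa using h)⟩,
    fun a b => by exact hgadj a b⟩
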